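/- Let 𝒳 be a type and 𝓗 a family of functions h : 𝒳 → ℝ. Define the loss concept class 𝒞 := { {(x, y, t) ∈ 𝒳 × ℝ × ℝ : (h(x) − y)² > t} : h ∈ 𝓗 } of subsets of 𝒳 × ℝ × ℝ, and let d_H ∈ ℕ be such that the threshold class 𝒯 := { {(x, t) ∈ 𝒳 × ℝ : h(x) > t} : h ∈ 𝓗 } shatters no finite subset of 𝒳 × ℝ of cardinality d_H + 1. Then 𝒞 shatters no finite subset of 𝒳 × ℝ × ℝ of cardinality exceeding 4(2 d_H + 1) log₂ 6; equivalently, the pseudo-dimension of the squared-loss class {(x,y) ↦ (h(x)−y)² : h ∈ 𝓗} is at most 4(2 d_H + 1) log₂ 6. -/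

import Mathlib

/-- A family `C` of subsets of `X` shatters a finite set `A` if every subset `B ⊆ A`
is the trace `c ∩ A` of some `c ∈ C`. -/
def Shatters {X : Type*} (C : Set (Set X)) (A : Finset X) : Prop :=
  ∀ B : Finset X, B ⊆ A → ∃ c ∈ C, ∀ x ∈ A, x ∈ c ↔ x ∈ B


open Finset



noncomputable def sq' (t : ℝ) : ℝ := if 0 ≤ t then Real.sqrt t else -1

lemma sq_gt_iff (a t : ℝ) : a^2 > t ↔ (a > sq' t ∨ -a > sq' t) := by
  unfold sq'
  by_cases ht : 0 ≤ t
  · simp only [if_pos ht]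
    rw [gt_iff_lt, gt_iff_lt, gt_iff_lt, ← lt_abs]
    constructor
    · intro h
      have := Real.sqrt_lt_sqrt ht h
      rwa [Real.sqrt_sq_eq_abs] at this
    · intro h
      have h2 : (Real.sqrt t)^2 = t := Real.sq_sqrt ht
      nlinarith [Real.sqrt_nonneg t, sq_abs a]
  · push_neg at ht
    simp only [if_neg (not_le.mpr ht)]
    constructor
    · intro _
      rcases le_or_gt a (-1) with h | h
      · right; linarith
      · left; linarith
    · intro _
      nlinarith [sq_nonneg a]



lemma logb_ge : (2.5 : ℝ) ≤ Real.logb 2 6 := by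
  have hlog2 : (0:ℝ) < Real.log 2 := Real.log_pos one_lt_two
  rw [Real.logb, le_div_iff₀ hlog2]
  have h32 : Real.log 32 ≤ Real.log 36 := Real.log_le_log (by norm_num) (by norm_num)
  have e1 : Real.log 32 = 5 * Real.log 2 := by
    rw [show (32:ℝ) = 2^5 by norm_num, Real.log_pow]; push_cast; ring
  have e2 : Real.log 36 = 2 * Real.log 6 := by
    rw [show (36:ℝ) = 6^2 by norm_num, Real.log_pow]; push_cast; ring
  rw [e1, e2] at h32
  linarith

lemma log20_lt : Real.log 20 < 3 := by
  have h : (20:ℝ) < Real.exp 3 := by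
    have := Real.exp_one_gt_d9
    have h3 : Real.exp 3 = (Real.exp 1)^3 := by
      rw [← Real.exp_nat_mul]; norm_num
    rw [h3]
    calc (20:ℝ) < 2.7182818283^3 := by norm_num
      _ < (Real.exp 1)^3 := by
          apply pow_lt_pow_left₀ this (by norm_num) (by norm_num)
  calc Real.log 20 < Real.log (Real.exp 3) := Real.log_lt_log (by norm_num) h
    _ = 3 := Real.log_exp 3

lemma numeric (d m : ℕ) (hm : 4*(2*(d:ℝ)+1)*Real.logb 2 6 < m)
    (h2 : 2^m ≤ (∑ k ∈ Finset.Iic d, m.choose k)^2) : False := by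
  have hL := logb_ge
  have hdm : (20:ℝ) * d < m := by nlinarith
  have hm0 : (0:ℝ) < m := by nlinarith
  rcases Nat.eq_zero_or_pos d with hd0 | hd
  · subst hd0
    rw [show Finset.Iic 0 = {0} by rfl] at h2
    simp at h2
    have : m = 0 := by
      by_contra h
      have := Nat.one_lt_two_pow (n := m) h
      omega
    simp [this] at hm0
  -- d ≥ 1
  have hdR : (0:ℝ) < d := by exact_mod_cast hd
  have hdm' : (d:ℝ) ≤ m := by nlinarith
  have hdmN : d ≤ m := by exact_mod_cast hdm'
  set Φ : ℕ := ∑ k ∈ Finset.Iic d, m.choose k with hΦ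
  set x : ℝ := (d:ℝ) / m with hx
  have hx0 : 0 < x := div_pos hdR hm0
  have hx1 : x ≤ 1 := (div_le_one hm0).mpr hdm'
  -- Φ * x^d ≤ (1+x)^m
  have key : (Φ:ℝ) * x^d ≤ (1+x)^m := by
    have step1 : (Φ:ℝ) * x^d ≤ ∑ k ∈ Finset.Iic d, (m.choose k : ℝ) * x^k := by
      rw [hΦ]; push_cast
      rw [Finset.sum_mul]
      apply Finset.sum_le_sum
      intro k hk
      have hk' : k ≤ d := Finset.mem_Iic.mp hk
      have := pow_le_pow_of_le_one hx0.le hx1 hk'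
      have hc : (0:ℝ) ≤ (m.choose k : ℝ) := by positivity
      nlinarith
    have step2 : ∑ k ∈ Finset.Iic d, (m.choose k : ℝ) * x^k
        ≤ ∑ k ∈ Finset.range (m+1), (m.choose k : ℝ) * x^k := by
      apply Finset.sum_le_sum_of_subset_of_nonneg
      · intro k hk
        simp only [Finset.mem_Iic] at hk
        simp only [Finset.mem_range]
        omega
      · intro k _ _
        positivity
    have step3 : ∑ k ∈ Finset.range (m+1), (m.choose k : ℝ) * x^k = (1+x)^m := by
      rw [add_comm (1:ℝ) x, add_pow]
      apply Finset.sum_congr rfl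
      intro k _
      ring
    linarith
  have expb : (1+x)^m ≤ Real.exp d := by
    have h1 : (1+x) ≤ Real.exp x := by
      have := Real.add_one_le_exp x; linarith
    have h2' : (1+x)^m ≤ (Real.exp x)^m := by
      apply pow_le_pow_left₀ (by positivity) h1
    have h3 : (Real.exp x)^m = Real.exp (x * m) := by
      rw [← Real.exp_nat_mul]; ring_nf
    have h4 : x * m = d := by
      rw [hx]; field_simp
    rw [h3, h4] at h2'
    exact h2'
  -- so Φ ≤ exp d * (m/d)^d
  have hΦle : (Φ:ℝ) ≤ Real.exp d * (↑m/↑d)^d := by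
    have hxd : (0:ℝ) < x^d := by positivity
    have : (Φ:ℝ) * x^d ≤ Real.exp d := le_trans key expb
    have h5 : (↑m/↑d:ℝ)^d = (x^d)⁻¹ := by
      rw [hx, ← inv_div, inv_pow]
    rw [h5]
    rw [le_mul_inv_iff₀ hxd]
    linarith [this]
  -- 2^m ≤ Φ^2 in ℝ
  have h2R : (2:ℝ)^m ≤ (Φ:ℝ)^2 := by exact_mod_cast h2
  have hΦpos : (0:ℝ) < Φ := by
    have : (0:ℝ) < (2:ℝ)^m := by positivity
    nlinarith
  have hbig : (2:ℝ)^m ≤ Real.exp (2*d) * (↑m/↑d)^(2*d) := by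
    have hrhs : (0:ℝ) ≤ Real.exp d * (↑m/↑d)^d := by positivity
    calc (2:ℝ)^m ≤ (Φ:ℝ)^2 := h2R
      _ ≤ (Real.exp d * (↑m/↑d)^d)^2 := by nlinarith
      _ = Real.exp (2*d) * (↑m/↑d)^(2*d) := by
          rw [mul_pow, ← Real.exp_nat_mul, pow_mul]
          ring_nf
  -- take logs
  set u : ℝ := (m:ℝ)/d with hu
  have hu0 : 0 < u := div_pos hm0 hdR
  have hu20 : 20 < u := by
    rw [hu, lt_div_iff₀ hdR]; linarith
  have hlog : (m:ℝ) * Real.log 2 ≤ 2*d + 2*d * Real.log u := by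
    have hl := Real.log_le_log (by positivity : (0:ℝ) < 2^m) hbig
    rw [Real.log_pow, Real.log_mul (by positivity) (by positivity), Real.log_exp,
      Real.log_pow] at hl
    push_cast at hl
    linarith
  -- m = u * d
  have hmu : (m:ℝ) = u * d := by
    rw [hu]; field_simp
  have hmain : u * Real.log 2 ≤ 2 + 2 * Real.log u := by
    rw [hmu] at hlog
    have : d * (u * Real.log 2) ≤ d * (2 + 2 * Real.log u) := by ring_nf; ring_nf at hlog; linarith
    exact le_of_mul_le_mul_left (by linarith) hdR
  -- contradiction
  have hlogu : Real.log u ≤ u/20 - 1 + Real.log 20 := by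
    have h1 : Real.log (u/20) ≤ u/20 - 1 := Real.log_le_sub_one_of_pos (by positivity)
    rw [Real.log_div (ne_of_gt hu0) (by norm_num)] at h1
    linarith
  have hlog2 := Real.log_two_gt_d9
  have hl20 := log20_lt
  nlinarith [mul_lt_mul_of_pos_right hlog2 hu0]



lemma Shatters.mono {X : Type*} {C : Set (Set X)} {A B : Finset X}
    (h : Shatters C A) (hBA : B ⊆ A) : Shatters C B := by
  intro T hT
  obtain ⟨c, hc, hm⟩ := h T (hT.trans hBA)
  exact ⟨c, hc, fun x hx => hm x (hBA hx)⟩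

lemma card_le_of_not_shatters {X : Type*} {C : Set (Set X)} {n : ℕ}
    (hC : ∀ A : Finset X, A.card = n + 1 → ¬ Shatters C A)
    {P : Finset X} (hP : Shatters C P) : P.card ≤ n := by
  by_contra h
  push_neg at h
  obtain ⟨Q, hQP, hQ⟩ := Finset.exists_subset_card_eq (h : n + 1 ≤ P.card)
  exact hC Q hQ (hP.mono hQP)

/-- If for every `T ⊆ S` there is a `c ∈ C` whose pullback under `g` traces `T` on `S`,
then `C` shatters the image of `S`, which moreover has the same cardinality. -/
lemma shatters_image {X Y : Type*} [DecidableEq X] [DecidableEq Y] (C : Set (Set Y)) (g : X → Y)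
    (S : Finset X)
    (key : ∀ T ⊆ S, ∃ c ∈ C, ∀ q ∈ S, (g q ∈ c ↔ q ∈ T)) :
    Shatters C (S.image g) ∧ (S.image g).card = S.card := by
  classical
  have hinj : Set.InjOn g S := by
    intro p hp q hq hpq
    by_contra hne
    obtain ⟨c, _, hc⟩ := key {p} (by simpa using hp)
    have h1 := (hc p hp).mpr (Finset.mem_singleton_self p)
    have h2 := (hc q hq).mp (hpq ▸ h1)
    exact hne ((Finset.mem_singleton.mp h2).symm)
  constructor
  · intro B hB
    obtain ⟨c, hcC, hc⟩ := key (S.filter (fun q => g q ∈ B)) (Finset.filter_subset _ _)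
    refine ⟨c, hcC, fun y hy => ?_⟩
    obtain ⟨q, hq, rfl⟩ := Finset.mem_image.mp hy
    rw [hc q hq, Finset.mem_filter]
    simp [hq]
  · exact Finset.card_image_of_injOn hinj

/-- Convert shattering by the "strictly below" threshold class into shattering (of a possibly
different set of the same cardinality) by the "strictly above" threshold class. -/
lemma below_to_above {𝒳 : Type*} (H : Set (𝒳 → ℝ)) (P : Finset (𝒳 × ℝ))
    (hP : Shatters {s : Set (𝒳 × ℝ) | ∃ h ∈ H, s = {q : 𝒳 × ℝ | q.2 > h q.1}} P) :
    ∃ P' : Finset (𝒳 × ℝ), P'.card = P.card ∧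
      Shatters {s : Set (𝒳 × ℝ) | ∃ h ∈ H, s = {q : 𝒳 × ℝ | h q.1 > q.2}} P' := by
  classical
  have h2 : ∀ B : Finset (𝒳 × ℝ), ∃ h : 𝒳 → ℝ, B ⊆ P →
      (h ∈ H ∧ ∀ p ∈ P, (h p.1 < p.2 ↔ p ∈ B)) := by
    intro B
    by_cases hB : B ⊆ P
    · obtain ⟨c, ⟨h, hhH, rfl⟩, hc⟩ := hP B hB
      exact ⟨h, fun _ => ⟨hhH, fun p hp => hc p hp⟩⟩
    · exact ⟨fun _ => 0, fun h => absurd h hB⟩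
  choose w hw using h2
  -- first coordinates are distinct on P
  have hfst : ∀ p ∈ P, ∀ q ∈ P, p.1 = q.1 → p = q := by
    intro p hp q hq hpq
    by_contra hne
    obtain ⟨hwH, hwp⟩ := hw {p} (by simpa using hp)
    rcases lt_trichotomy p.2 q.2 with h | h | h
    · have h1 := (hwp p hp).mpr (Finset.mem_singleton_self p)
      have h2' := (hwp q hq)
      rw [← hpq] at h2'
      have : q ∈ ({p} : Finset (𝒳 × ℝ)) := h2'.mp (lt_trans h1 h)
      exact hne ((Finset.mem_singleton.mp this).symm)
    · exact hne (Prod.ext hpq h)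
    · obtain ⟨hwH', hwq⟩ := hw {q} (by simpa using hq)
      have h1 := (hwq q hq).mpr (Finset.mem_singleton_self q)
      have h2' := (hwq p hp)
      rw [hpq] at h2'
      have : p ∈ ({q} : Finset (𝒳 × ℝ)) := h2'.mp (lt_trans h1 h)
      exact hne (Finset.mem_singleton.mp this)
  -- the new thresholds
  set S : 𝒳 × ℝ → Finset ℝ :=
    fun p => (P.powerset.filter (fun B => w B p.1 < p.2)).image (fun B => w B p.1) with hS
  have hSne : ∀ p ∈ P, (S p).Nonempty := by
    intro p hp
    refine ⟨w P p.1, Finset.mem_image.mpr ⟨P, Finset.mem_filter.mpr ⟨Finset.mem_powerset_self P, ?_⟩, rfl⟩⟩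
    exact ((hw P Finset.Subset.rfl).2 p hp).mpr hp
  set u : 𝒳 × ℝ → ℝ := fun p => if hne : (S p).Nonempty then (S p).max' hne else 0 with hu
  have hult : ∀ p ∈ P, u p < p.2 := by
    intro p hp
    rw [hu]
    simp only [dif_pos (hSne p hp)]
    have := Finset.max'_mem (S p) (hSne p hp)
    obtain ⟨B, hB, hBe⟩ := Finset.mem_image.mp this
    rw [← hBe]
    exact (Finset.mem_filter.mp hB).2
  have hule : ∀ p ∈ P, ∀ B ⊆ P, w B p.1 < p.2 → w B p.1 ≤ u p := by
    intro p hp B hB hlt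
    rw [hu]
    simp only [dif_pos (hSne p hp)]
    apply Finset.le_max'
    exact Finset.mem_image.mpr ⟨B, Finset.mem_filter.mpr ⟨Finset.mem_powerset.mpr hB, hlt⟩, rfl⟩
  refine ⟨P.image (fun p => (p.1, u p)), ?_, ?_⟩
  · apply Finset.card_image_of_injOn
    intro p hp q hq hpq
    simp only at hpq
    exact hfst p hp q hq (Prod.ext_iff.mp hpq).1
  · intro B' hB'
    set B : Finset (𝒳 × ℝ) := P.filter (fun p => (p.1, u p) ∉ B') with hB
    have hBP : B ⊆ P := Finset.filter_subset _ _
    obtain ⟨hwH, hwp⟩ := hw B hBP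
    refine ⟨{q : 𝒳 × ℝ | w B q.1 > q.2}, ⟨w B, hwH, rfl⟩, ?_⟩
    intro y hy
    obtain ⟨p, hp, rfl⟩ := Finset.mem_image.mp hy
    simp only [Set.mem_setOf_eq]
    constructor
    · intro hgt
      by_contra hnB'
      have hpB : p ∈ B := Finset.mem_filter.mpr ⟨hp, hnB'⟩
      have := (hwp p hp).mpr hpB
      have := hule p hp B hBP this
      exact absurd hgt (not_lt.mpr this)
    · intro hB'mem
      have hpnB : p ∉ B := by
        rw [hB, Finset.mem_filter]
        push_neg
        intro _
        simpa using hB'mem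
      have hge : ¬ (w B p.1 < p.2) := fun h => hpnB ((hwp p hp).mp h)
      push_neg at hge
      exact lt_of_lt_of_le (hult p hp) hge


open Classical in
noncomputable def tr1 {𝒳 : Type*} (A : Finset (𝒳 × ℝ × ℝ)) (h : 𝒳 → ℝ) :
    Finset {x // x ∈ A} :=
  Finset.univ.filter (fun q => h q.1.1 - q.1.2.1 > sq' q.1.2.2)

open Classical in
noncomputable def tr2 {𝒳 : Type*} (A : Finset (𝒳 × ℝ × ℝ)) (h : 𝒳 → ℝ) :
    Finset {x // x ∈ A} :=
  Finset.univ.filter (fun q => q.1.2.1 - h q.1.1 > sq' q.1.2.2)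

lemma mem_tr1 {𝒳 : Type*} {A : Finset (𝒳 × ℝ × ℝ)} {h : 𝒳 → ℝ} {q : {x // x ∈ A}} :
    q ∈ tr1 A h ↔ h q.1.1 - q.1.2.1 > sq' q.1.2.2 := by
  simp [tr1]

lemma mem_tr2 {𝒳 : Type*} {A : Finset (𝒳 × ℝ × ℝ)} {h : 𝒳 → ℝ} {q : {x // x ∈ A}} :
    q ∈ tr2 A h ↔ q.1.2.1 - h q.1.1 > sq' q.1.2.2 := by
  simp [tr2]


/-- **Squared-loss lifting of the pseudo-dimension.** Let `𝓗` be a family of real-valued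
functions on `𝒳` whose threshold class `{ {(x,t) : h(x) > t} : h ∈ 𝓗 }` shatters no
finite set of cardinality `d_H + 1`.  Then the thresholded squared-loss class
`{ {(x,y,t) : (h(x) − y)² > t} : h ∈ 𝓗 }` shatters no finite set of cardinality
exceeding `4(2 d_H + 1) log₂ 6`; i.e. the pseudo-dimension of the squared-loss class
is at most `4(2 d_H + 1) log₂ 6`. -/
theorem squared_loss_pseudodimension
    {𝒳 : Type*} (H : Set (𝒳 → ℝ)) (dH : ℕ)
    (hH : ∀ A : Finset (𝒳 × ℝ), A.card = dH + 1 →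
      ¬ Shatters {s : Set (𝒳 × ℝ) | ∃ h ∈ H, s = {q : 𝒳 × ℝ | h q.1 > q.2}} A) :
    ∀ A : Finset (𝒳 × ℝ × ℝ),
      (4 * (2 * (dH : ℝ) + 1) * Real.logb 2 6 < (A.card : ℝ)) →
      ¬ Shatters
          {s : Set (𝒳 × ℝ × ℝ) | ∃ h ∈ H, s = {q : 𝒳 × ℝ × ℝ | (h q.1 - q.2.1) ^ 2 > q.2.2}}
          A := by
  intro A hAcard hS
  classical
  set m := A.card with hm
  set α := {x : 𝒳 × ℝ × ℝ // x ∈ A} with hα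
  -- decomposition of each trace
  have hdecomp : ∀ S : Finset α, ∃ h : 𝒳 → ℝ, h ∈ H ∧ S = tr1 A h ∪ tr2 A h := by
    intro S
    have hBA : S.image Subtype.val ⊆ A := by
      intro x hx
      obtain ⟨q, _, rfl⟩ := Finset.mem_image.mp hx
      exact q.2
    obtain ⟨c, ⟨h, hhH, rfl⟩, hc⟩ := hS (S.image Subtype.val) hBA
    refine ⟨h, hhH, ?_⟩
    ext q
    have h1 := hc q.1 q.2
    have h2 : (q : 𝒳 × ℝ × ℝ) ∈ S.image Subtype.val ↔ q ∈ S := by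
      constructor
      · intro hx
        obtain ⟨r, hr, hre⟩ := Finset.mem_image.mp hx
        rwa [Subtype.ext hre] at hr
      · intro hq
        exact Finset.mem_image.mpr ⟨q, hq, rfl⟩
    rw [Finset.mem_union, mem_tr1, mem_tr2]
    rw [h2] at h1
    rw [← h1]
    simp only [Set.mem_setOf_eq]
    rw [sq_gt_iff, neg_sub]
  -- counting: 2^m ≤ |A1| * |A2|
  set A1 : Finset (Finset α) := Finset.univ.filter (fun u => ∃ h ∈ H, u = tr1 A h) with hA1
  set A2 : Finset (Finset α) := Finset.univ.filter (fun u => ∃ h ∈ H, u = tr2 A h) with hA2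
  choose f hfH hf using hdecomp
  have hcount : 2 ^ m ≤ A1.card * A2.card := by
    have hinj : ∀ S ∈ (Finset.univ : Finset (Finset α)), ∀ S' ∈ (Finset.univ : Finset (Finset α)),
        (tr1 A (f S), tr2 A (f S)) = (tr1 A (f S'), tr2 A (f S')) → S = S' := by
      intro S _ S' _ hpair
      obtain ⟨e1, e2⟩ := Prod.ext_iff.mp hpair
      simp only at e1 e2
      rw [hf S, hf S', e1, e2]
    have hmaps : ∀ S ∈ (Finset.univ : Finset (Finset α)),
        (tr1 A (f S), tr2 A (f S)) ∈ A1 ×ˢ A2 := by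
      intro S _
      rw [Finset.mem_product]
      constructor
      · rw [hA1, Finset.mem_filter]
        exact ⟨Finset.mem_univ _, f S, hfH S, rfl⟩
      · rw [hA2, Finset.mem_filter]
        exact ⟨Finset.mem_univ _, f S, hfH S, rfl⟩
    have := Finset.card_le_card_of_injOn _ hmaps hinj
    rwa [Finset.card_univ, Fintype.card_finset, Fintype.card_coe, Finset.card_product, ← hm] at this
  -- VC dimension of A1
  have hvc1 : ∀ S : Finset α, A1.Shatters S → S.card ≤ dH := by
    intro S hSh
    set g : α → 𝒳 × ℝ := fun q => (q.1.1, q.1.2.1 + sq' q.1.2.2) with hg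
    have key : ∀ T ⊆ S, ∃ c ∈ {s : Set (𝒳 × ℝ) | ∃ h ∈ H, s = {q : 𝒳 × ℝ | h q.1 > q.2}},
        ∀ q ∈ S, (g q ∈ c ↔ q ∈ T) := by
      intro T hT
      obtain ⟨u, hu, hSu⟩ := hSh hT
      rw [hA1, Finset.mem_filter] at hu
      obtain ⟨-, h, hhH, rfl⟩ := hu
      refine ⟨{q : 𝒳 × ℝ | h q.1 > q.2}, ⟨h, hhH, rfl⟩, ?_⟩
      intro q hq
      have : q ∈ tr1 A h ↔ q ∈ T := by
        rw [← hSu, Finset.mem_inter]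
        simp [hq]
      rw [← this, mem_tr1]
      simp only [Set.mem_setOf_eq, hg]
      constructor <;> intro h' <;> linarith
    obtain ⟨hsh, hcard⟩ := shatters_image _ g S key
    rw [← hcard]
    exact card_le_of_not_shatters hH hsh
  -- VC dimension of A2
  have hvc2 : ∀ S : Finset α, A2.Shatters S → S.card ≤ dH := by
    intro S hSh
    set g : α → 𝒳 × ℝ := fun q => (q.1.1, q.1.2.1 - sq' q.1.2.2) with hg
    have key : ∀ T ⊆ S, ∃ c ∈ {s : Set (𝒳 × ℝ) | ∃ h ∈ H, s = {q : 𝒳 × ℝ | q.2 > h q.1}},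
        ∀ q ∈ S, (g q ∈ c ↔ q ∈ T) := by
      intro T hT
      obtain ⟨u, hu, hSu⟩ := hSh hT
      rw [hA2, Finset.mem_filter] at hu
      obtain ⟨-, h, hhH, rfl⟩ := hu
      refine ⟨{q : 𝒳 × ℝ | q.2 > h q.1}, ⟨h, hhH, rfl⟩, ?_⟩
      intro q hq
      have : q ∈ tr2 A h ↔ q ∈ T := by
        rw [← hSu, Finset.mem_inter]
        simp [hq]
      rw [← this, mem_tr2]
      simp only [Set.mem_setOf_eq, hg]
      constructor <;> intro h' <;> linarith
    obtain ⟨hsh, hcard⟩ := shatters_image _ g S key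
    obtain ⟨P', hP'card, hP'sh⟩ := below_to_above H _ hsh
    rw [← hcard, ← hP'card]
    exact card_le_of_not_shatters hH hP'sh
  -- Sauer-Shelah for both
  have sauer : ∀ (F : Finset (Finset α)), (∀ S : Finset α, F.Shatters S → S.card ≤ dH) →
      F.card ≤ ∑ k ∈ Finset.Iic dH, m.choose k := by
    intro F hvc
    have hvcd : F.vcDim ≤ dH := by
      apply Finset.sup_le
      intro S hs
      exact hvc S (Finset.mem_shatterer.mp hs)
    calc F.card ≤ F.shatterer.card := Finset.card_le_card_shatterer _
      _ ≤ ∑ k ∈ Finset.Iic F.vcDim, (Fintype.card α).choose k :=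
          Finset.card_shatterer_le_sum_vcDim
      _ ≤ ∑ k ∈ Finset.Iic dH, (Fintype.card α).choose k :=
          Finset.sum_le_sum_of_subset (Finset.Iic_subset_Iic.mpr hvcd)
      _ = ∑ k ∈ Finset.Iic dH, m.choose k := by rw [Fintype.card_coe]
  have h1 := sauer A1 hvc1
  have h2 := sauer A2 hvc2
  exact numeric dH m hAcard (by
    calc 2 ^ m ≤ A1.card * A2.card := hcount
      _ ≤ (∑ k ∈ Finset.Iic dH, m.choose k) * (∑ k ∈ Finset.Iic dH, m.choose k) :=
          Nat.mul_le_mul h1 h2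
      _ = (∑ k ∈ Finset.Iic dH, m.choose k)^2 := (sq _).symm)
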